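/- For every j : Fin 5, the set O j has exactly 6 elements, every element of O j is at Euclidean distance 1 from the centroid of O j, and each v ∈ O j is at distance 2 from exactly one other element of O j and at distance √2 from each of the remaining four; i.e., each octahedral facet of the rectified 5-cell is a regular octahedron with edge length √2. -/

import Mathlib

noncomputable section

/-- The vertex set of the Euclidean rectified 5-cell: all coordinate
permutations of the point `(1,1,1,0,0)`. -/
def V : Set (EuclideanSpace ℝ (Fin 5)) :=
  {x | (∀ i, x i = 0 ∨ x i = 1) ∧ (∑ i, x i) = 3}

/-- The vertex set of the octahedral facet labelled `j`. -/
def O (j : Fin 5) : Set (EuclideanSpace ℝ (Fin 5)) := {v ∈ V | v j = 1}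

namespace OctAux

def p (s : Finset (Fin 5)) : EuclideanSpace ℝ (Fin 5) := WithLp.toLp 2 (fun i => if i ∈ s then (1:ℝ) else 0)

@[simp] lemma p_apply (s : Finset (Fin 5)) (i : Fin 5) :
    p s i = if i ∈ s then 1 else 0 := rfl

def T (j : Fin 5) : Finset (Finset (Fin 5)) :=
  Finset.univ.filter fun s => s.card = 3 ∧ j ∈ s

lemma mem_T {j : Fin 5} {s : Finset (Fin 5)} : s ∈ T j ↔ s.card = 3 ∧ j ∈ s := by
  simp [T]

lemma p_inj : Function.Injective p := by
  intro s t h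
  ext i
  have h' : p s i = p t i := congrArg (fun x => x i) h
  simp only [p_apply] at h'
  by_cases hs : i ∈ s <;> by_cases ht : i ∈ t <;> simp [hs, ht] at h' ⊢

lemma O_eq (j : Fin 5) : O j = p '' ↑(T j) := by
  ext v
  simp only [Set.mem_image, Finset.mem_coe, mem_T]
  constructor
  · rintro ⟨⟨h01, hsum⟩, hj⟩
    refine ⟨Finset.univ.filter (fun i => v i = 1), ⟨?_, by simp [hj]⟩, ?_⟩
    · have : (∑ i, v i) = ((Finset.univ.filter (fun i => v i = 1)).card : ℝ) := by
        rw [← Finset.sum_boole]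
        refine Finset.sum_congr rfl fun i _ => ?_
        rcases h01 i with h | h <;> simp [h]
      rw [this] at hsum
      exact_mod_cast hsum
    · refine PiLp.ext fun i => ?_
      simp only [p_apply, Finset.mem_filter, Finset.mem_univ, true_and]
      rcases h01 i with h | h <;> simp [h]
  · rintro ⟨s, ⟨hcard, hj⟩, rfl⟩
    refine ⟨⟨fun i => ?_, ?_⟩, by simp [hj]⟩
    · by_cases h : i ∈ s <;> simp [h]
    · rw [show (∑ i, p s i) = ∑ i : Fin 5, (if i ∈ s then (1:ℝ) else 0) from rfl,
        Finset.sum_boole, Finset.filter_mem_eq_inter, Finset.univ_inter, hcard]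
      norm_num

lemma dist_p (s t : Finset (Fin 5)) :
    dist (p s) (p t) = Real.sqrt ((symmDiff s t).card) := by
  rw [EuclideanSpace.dist_eq]
  congr 1
  have h : ∀ i : Fin 5, dist (p s i) (p t i) ^ 2
      = if i ∈ symmDiff s t then (1:ℝ) else 0 := by
    intro i
    rw [Real.dist_eq, sq_abs]
    by_cases hs : i ∈ s <;> by_cases ht : i ∈ t <;>
      simp [Finset.mem_symmDiff, hs, ht]
  simp_rw [h]
  rw [Finset.sum_boole, Finset.filter_mem_eq_inter, Finset.univ_inter]

lemma Tcard (j : Fin 5) : (T j).card = 6 := by fin_cases j <;> decide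

lemma count_mem (j i : Fin 5) :
    ((T j).filter (fun s => i ∈ s)).card = if i = j then 6 else 3 := by
  fin_cases j <;> fin_cases i <;> decide

lemma key_unique' (j : Fin 5) :
    ∀ s ∈ T j, ∃ t, (t ∈ T j ∧ t ≠ s ∧ (symmDiff s t).card = 4) ∧
      ∀ t', t' ∈ T j → t' ≠ s → (symmDiff s t').card = 4 → t' = t := by
  fin_cases j <;> decide

lemma key_unique (j : Fin 5) :
    ∀ s ∈ T j, ∃! t, t ∈ T j ∧ t ≠ s ∧ (symmDiff s t).card = 4 := by
  intro s hs
  obtain ⟨t, ht, hu⟩ := key_unique' j s hs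
  exact ⟨t, ht, fun t' ⟨a, b, c⟩ => hu t' a b c⟩

lemma key_dichot (j : Fin 5) :
    ∀ s ∈ T j, ∀ t ∈ T j, t ≠ s → (symmDiff s t).card = 4 ∨ (symmDiff s t).card = 2 := by
  fin_cases j <;> decide

end OctAux

open OctAux

/-- Each octahedral facet of the rectified 5-cell is a regular octahedron
with edge length `√2`: `O j` has 6 vertices, all at distance 1 from the
centroid of `O j`; each vertex is at distance 2 from exactly one other
vertex and at distance `√2` from each of the remaining four. -/
theorem octahedral_facet_regular (j : Fin 5) :
    (O j).ncard = 6 ∧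
    (∀ v ∈ O j, dist v ((6 : ℝ)⁻¹ • ∑ᶠ w ∈ O j, w) = 1) ∧
    (∀ v ∈ O j, ∃! w, w ∈ O j ∧ w ≠ v ∧ dist v w = 2) ∧
    (∀ v ∈ O j, ∀ w ∈ O j, w ≠ v → dist v w = 2 ∨ dist v w = Real.sqrt 2) := by
  classical
  have hOe := O_eq j
  have hmemO : ∀ v, v ∈ O j ↔ ∃ s ∈ T j, p s = v := by
    intro v; rw [hOe]; simp
  -- centroid
  have hsum : (∑ᶠ w ∈ O j, w) = ∑ s ∈ T j, p s := by
    rw [hOe, ← Finset.coe_image, finsum_mem_coe_finset,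
      Finset.sum_image (fun a _ b _ h => p_inj h)]
  have hcent : ∀ i : Fin 5, ((6 : ℝ)⁻¹ • ∑ᶠ w ∈ O j, w) i
      = if i = j then 1 else 1/2 := by
    intro i
    rw [hsum, PiLp.smul_apply]
    have h1 : (∑ s ∈ T j, p s) i = ∑ s ∈ T j, p s i := by
      calc (∑ s ∈ T j, p s) i
          = (EuclideanSpace.proj (𝕜 := ℝ) i) (∑ s ∈ T j, p s) := rfl
        _ = ∑ s ∈ T j, p s i := map_sum _ _ _
    rw [h1]
    simp only [p_apply, Finset.sum_boole, smul_eq_mul]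
    rw [count_mem j i]
    split_ifs <;> norm_num
  refine ⟨?_, ?_, ?_, ?_⟩
  · rw [hOe, Set.ncard_image_of_injective _ p_inj, Set.ncard_coe_finset, Tcard]
  · intro v hv
    obtain ⟨s, hs, rfl⟩ := (hmemO v).1 hv
    rw [EuclideanSpace.dist_eq]
    have hje : j ∈ (Finset.univ : Finset (Fin 5)) := Finset.mem_univ j
    have hval : ∀ i : Fin 5, i ≠ j →
        dist (p s i) (((6 : ℝ)⁻¹ • ∑ᶠ w ∈ O j, w) i) ^ 2 = 1/4 := by
      intro i hij
      rw [hcent i, if_neg hij, Real.dist_eq, sq_abs, p_apply]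
      by_cases h : i ∈ s <;> simp [h] <;> norm_num
    have hj' : dist (p s j) (((6 : ℝ)⁻¹ • ∑ᶠ w ∈ O j, w) j) ^ 2 = 0 := by
      rw [hcent j, if_pos rfl, p_apply, if_pos ((mem_T.1 hs).2)]
      simp
    rw [← Finset.add_sum_erase _ _ hje, hj', zero_add,
      Finset.sum_congr rfl (fun i hi => hval i (Finset.ne_of_mem_erase hi)),
      Finset.sum_const, Finset.card_erase_of_mem hje]
    norm_num
  · intro v hv
    obtain ⟨s, hs, rfl⟩ := (hmemO v).1 hv
    obtain ⟨t, ⟨ht, hts, hc⟩, huniq⟩ := key_unique j s hs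
    refine ⟨p t, ⟨(hmemO _).2 ⟨t, ht, rfl⟩, fun h => hts (p_inj h), ?_⟩, ?_⟩
    · rw [dist_p, hc]
      rw [show ((4:ℕ):ℝ) = 2^2 by norm_num, Real.sqrt_sq (by norm_num)]
    · rintro w ⟨hw, hwne, hwd⟩
      obtain ⟨t', ht', rfl⟩ := (hmemO w).1 hw
      have hne : t' ≠ s := fun h => hwne (by rw [h])
      have hcard4 : (symmDiff s t').card = 4 := by
        rw [dist_p] at hwd
        rcases key_dichot j s hs t' ht' hne with h | h
        · exact h
        · exfalso
          rw [h] at hwd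
          have hlt : Real.sqrt 2 < 2 := by
            nlinarith [Real.sq_sqrt (by norm_num : (2:ℝ) ≥ 0),
              Real.sqrt_nonneg (2:ℝ)]
          rw [show ((2:ℕ):ℝ) = 2 by norm_num] at hwd
          linarith
      exact congrArg p (huniq t' ⟨ht', hne, hcard4⟩)
  · intro v hv w hw hne
    obtain ⟨s, hs, rfl⟩ := (hmemO v).1 hv
    obtain ⟨t, ht, rfl⟩ := (hmemO w).1 hw
    have hts : t ≠ s := fun h => hne (by rw [h])
    rcases key_dichot j s hs t ht hts with h | h
    · left
      rw [dist_p, h, show ((4:ℕ):ℝ) = 2^2 by norm_num, Real.sqrt_sq (by norm_num)]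
    · right
      rw [dist_p, h]
      norm_num
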